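/- Let G be the cograph obtained as the series composition of l ≥ 1 graphs, each consisting of two isolated vertices a_i, b_i (i.e., G is the complete multipartite graph K_{2,2,…,2} with l parts of size 2, the cocktail party graph). Then the closed linearity of G is at most 2. -/

import Mathlib

def IsIntervalOf {V : Type*} {n : ℕ} (σ : V ≃ Fin n) (I : Set V) : Prop :=
  ∃ a b : Fin n, I = {v | a ≤ σ v ∧ σ v ≤ b}

def closedNbhd {V : Type*} (G : SimpleGraph V) (x : V) : Set V := {y | G.Adj x y ∨ y = x}

def HasClosedLineModel {V : Type*} [Fintype V] (G : SimpleGraph V) (p : ℕ) : Prop :=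
  ∃ σ : Fin p → (V ≃ Fin (Fintype.card V)),
    ∀ x : V, ∃ I : Fin p → Set V,
      (∀ i, IsIntervalOf (σ i) (I i)) ∧ (⋃ i, I i) = closedNbhd G x

def HasOpenLineModel {V : Type*} [Fintype V] (G : SimpleGraph V) (p : ℕ) : Prop :=
  ∃ σ : Fin p → (V ≃ Fin (Fintype.card V)),
    ∀ x : V, ∃ I : Fin p → Set V,
      (∀ i, IsIntervalOf (σ i) (I i)) ∧ (⋃ i, I i) = G.neighborSet x

noncomputable def linCl {V : Type*} [Fintype V] (G : SimpleGraph V) : ℕ :=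
  sInf {p | HasClosedLineModel G p}

noncomputable def linOp {V : Type*} [Fintype V] (G : SimpleGraph V) : ℕ :=
  sInf {p | HasOpenLineModel G p}

def HasContigModel {V : Type*} [Fintype V] (G : SimpleGraph V) (k : ℕ) : Prop :=
  ∃ σ : V ≃ Fin (Fintype.card V),
    ∀ x : V, ∃ I : Fin k → Set V,
      (∀ i, IsIntervalOf σ (I i)) ∧ (⋃ i, I i) = closedNbhd G x

noncomputable def contCl {V : Type*} [Fintype V] (G : SimpleGraph V) : ℕ :=
  sInf {k | HasContigModel G k}

/-- The cocktail party graph with `l` parts of size 2: vertices `(i, j)` are adjacent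
iff they lie in different parts. -/
def cocktail (l : ℕ) : SimpleGraph (Fin l × Fin 2) where
  Adj x y := x.1 ≠ y.1
  symm := ⟨fun _ _ h => Ne.symm h⟩
  loopless := ⟨fun _ h => h rfl⟩


lemma interval_lt {V : Type*} {n : ℕ} (hn : 2 ≤ n) (σ : V ≃ Fin n) (p : Fin n) :
    IsIntervalOf σ {v | σ v < p} := by
  obtain ⟨k, rfl⟩ : ∃ k, n = k + 1 := ⟨n - 1, by omega⟩
  by_cases hp : (p : ℕ) = 0
  · refine ⟨⟨1, by omega⟩, ⟨0, by omega⟩, ?_⟩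
    ext v
    simp only [Set.mem_setOf_eq, Fin.le_def, Fin.lt_def, hp]
    omega
  · have hp0 : p ≠ 0 := by
      intro h
      rw [h] at hp
      exact hp rfl
    refine ⟨⟨0, by omega⟩, p - 1, ?_⟩
    ext v
    simp only [Set.mem_setOf_eq, Fin.le_def, Fin.lt_def, Fin.coe_sub_one, hp0, if_false]
    omega

theorem cocktail_linearity (l : ℕ) (hl : 1 ≤ l) : linCl (cocktail l) ≤ 2 := by
  apply Nat.sInf_le
  show HasClosedLineModel (cocktail l) 2
  have hn : 2 ≤ Fintype.card (Fin l × Fin 2) := by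
    simp only [Fintype.card_prod, Fintype.card_fin]
    omega
  set n := Fintype.card (Fin l × Fin 2) with hndef
  set e : (Fin l × Fin 2) ≃ Fin n := Fintype.equivFin _ with he
  refine ⟨![e, e.trans (Fin.revPerm)], fun x => ?_⟩
  set m : Fin l × Fin 2 := (x.1, x.2 + 1) with hm
  set p := e m with hp
  refine ⟨![{v | e v < p}, {v | p < e v}], ?_, ?_⟩
  · intro i
    fin_cases i
    · simpa using interval_lt hn e p
    · have h2 : {v : Fin l × Fin 2 | p < e v}
          = {v | (e.trans Fin.revPerm) v < p.rev} := by
        ext v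
        simp [Fin.rev_lt_rev]
      simpa [h2] using interval_lt hn (e.trans Fin.revPerm) p.rev
  · ext y
    have hym : (e y < p ∨ p < e y) ↔ y ≠ m := by
      constructor
      · rintro (h | h) rfl
        · exact absurd rfl (ne_of_lt h)
        · exact absurd rfl (ne_of_gt h)
      · intro h
        rcases lt_trichotomy (e y) p with h' | h' | h'
        · exact Or.inl h'
        · exact absurd (e.injective (h' : e y = e m)) h
        · exact Or.inr h'
    simp only [Set.mem_iUnion, closedNbhd, Set.mem_setOf_eq]
    have : (∃ i : Fin 2, y ∈ ![{v : Fin l × Fin 2 | e v < p}, {v | p < e v}] i)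
        ↔ (e y < p ∨ p < e y) := by
      constructor
      · rintro ⟨i, hi⟩; fin_cases i
        · exact Or.inl hi
        · exact Or.inr hi
      · rintro (h | h)
        · exact ⟨0, h⟩
        · exact ⟨1, h⟩
    rw [this, hym]
    show y ≠ m ↔ ((cocktail l).Adj x y ∨ y = x)
    constructor
    · intro h
      by_cases h1 : x.1 = y.1
      · right
        have h2 : y.2 ≠ x.2 + 1 := by
          intro h2
          exact h (Prod.ext h1.symm h2)
        have : y.2 = x.2 := by
          revert h2; exact (by decide : ∀ a b : Fin 2, a ≠ b + 1 → a = b) y.2 x.2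
        exact Prod.ext h1.symm this
      · exact Or.inl h1
    · rintro (h | rfl)
      · intro h2
        exact h (by rw [h2])
      · intro h2
        have := congrArg Prod.snd h2
        simp only [hm] at this
        exact (by decide : ∀ a : Fin 2, a ≠ a + 1) y.2 this
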